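/- Let T be an antiunitary operator on a complex Hilbert space H with T² = λΘ where Θ is a unitary with Θ² = I and λ is a unimodular complex number. If Ω is a unit vector with ΘΩ = Ω and Θ(TΩ) = TΩ, then λ is real, i.e. λ ∈ {+1,-1}. -/

import Mathlib

open scoped ComplexInnerProductSpace

/-- If `T` is antiunitary with `T² = λΘ` where `Θ` is a unitary with `Θ² = I` and `|λ| = 1`,
and `Ω` is a unit vector with `ΘΩ = Ω` and `Θ(TΩ) = TΩ`, then `λ ∈ {+1, -1}`. -/
theorem antiunitary_square_phase_real
    {H : Type*} [NormedAddCommGroup H] [InnerProductSpace ℂ H] [CompleteSpace H]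
    (T : H → H)
    (hadd : ∀ x y, T (x + y) = T x + T y)
    (hsmul : ∀ (c : ℂ) (x : H), T (c • x) = (starRingEnd ℂ) c • T x)
    (hbij : Function.Bijective T)
    (hinner : ∀ x y, ⟪T x, T y⟫ = ⟪y, x⟫)
    (Θ : H →L[ℂ] H)
    (hΘinner : ∀ x y, ⟪Θ x, Θ y⟫ = ⟪x, y⟫)
    (hΘsurj : Function.Surjective Θ)
    (hΘ2 : Θ * Θ = 1)
    (l : ℂ) (hl : ‖l‖ = 1)
    (hT2 : ∀ x, T (T x) = l • Θ x)
    (Ω : H) (hΩ : ‖Ω‖ = 1)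
    (hΘΩ : Θ Ω = Ω)
    (hΘTΩ : Θ (T Ω) = T Ω) :
    l = 1 ∨ l = -1 := by
  have hTΩ : T Ω ≠ 0 := by
    intro h
    have h1 : ⟪T Ω, T Ω⟫ = ⟪Ω, Ω⟫ := hinner Ω Ω
    rw [h, inner_zero_right, @inner_self_eq_norm_sq_to_K ℂ, hΩ] at h1
    simp at h1
  have h2 : T (T Ω) = l • Ω := by rw [hT2, hΘΩ]
  have h3 : T (T (T Ω)) = l • T Ω := by rw [hT2, hΘTΩ]
  have h4 : T (T (T Ω)) = (starRingEnd ℂ) l • T Ω := by rw [h2, hsmul]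
  have h6 : ((starRingEnd ℂ) l - l) • T Ω = 0 := by
    rw [sub_smul, ← h4, h3, sub_self]
  have h5 : (starRingEnd ℂ) l = l := by
    rcases smul_eq_zero.1 h6 with h | h
    · exact sub_eq_zero.1 h
    · exact absurd h hTΩ
  have hre : l.im = 0 := by
    have := congrArg Complex.im h5
    simp [Complex.conj_im] at this
    linarith
  have habs : l.re = 1 ∨ l.re = -1 := by
    have hl2 : |l.re| = 1 := by
      rw [Complex.norm_def, Complex.normSq_apply, hre] at hl
      simpa [Real.sqrt_mul_self_eq_abs] using hl
    rcases abs_eq (by norm_num : (0:ℝ) ≤ 1) |>.1 hl2 with h|h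
    · exact Or.inl h
    · exact Or.inr h
  rcases habs with h|h
  · left; exact Complex.ext h hre
  · right; exact Complex.ext (by simp [h]) (by simp [hre])
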